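/- For real a, b, c > 0 with c ≠ b, a < 1, and b, c > a − 1, the series Σ_{n=0}^∞ (n+1)·(a)_n (b)_n (c)_n / ((b+1)_n (c+1)_n (1)_n) equals (bc·Γ(1−a)/(c−b))·[(1−b)Γ(b)/Γ(1−a+b) − (1−c)Γ(c)/Γ(1−a+c)]. -/

import Mathlib

open Real MeasureTheory
open scoped NNReal ENNReal

noncomputable def poch (x : ℝ) (n : ℕ) : ℝ := (ascPochhammer ℝ n).eval x

noncomputable def cc (a : ℝ) (n : ℕ) : ℝ := poch a n / n.factorial

lemma poch_zero (x : ℝ) : poch x 0 = 1 := by simp [poch]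

lemma poch_succ (x : ℝ) (n : ℕ) : poch x (n + 1) = poch x n * (x + n) := by
  simp [poch, ascPochhammer_succ_right]

lemma poch_succ_left (x : ℝ) (n : ℕ) : poch x (n + 1) = x * poch (x + 1) n := by
  simp [poch, ascPochhammer_succ_left, Polynomial.eval_comp]

lemma poch_one (n : ℕ) : poch 1 n = n.factorial := by
  induction n with
  | zero => simp [poch_zero]
  | succ n ih => rw [poch_succ, ih, Nat.factorial_succ]; push_cast; ring

lemma poch_pos {x : ℝ} (hx : 0 < x) (n : ℕ) : 0 < poch x n := by
  induction n with
  | zero => simp [poch_zero]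
  | succ n ih => rw [poch_succ]; positivity

lemma poch_shift {x : ℝ} (hx : x ≠ 0) (n : ℕ) :
    poch (x + 1) n = poch x n * (x + n) / x := by
  have h := poch_succ_left x n
  rw [poch_succ] at h
  field_simp
  linarith [h]

section Binom
variable {a : ℝ} (ha : 0 < a) (ha1 : a < 1)


lemma cc_zero : cc a 0 = 1 := by simp [cc, poch_zero]

include ha in
lemma cc_pos (n : ℕ) : 0 < cc a n := by
  have := poch_pos ha n
  have : (0:ℝ) < n.factorial := by positivity
  unfold cc; positivity

include ha ha1 in
lemma cc_le_one (n : ℕ) : cc a n ≤ 1 := by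
  induction n with
  | zero => simp [cc_zero]
  | succ n ih =>
    have h1 : (0:ℝ) < n.factorial := by exact_mod_cast n.factorial_pos
    have h2 : (0:ℝ) < (n+1).factorial := by exact_mod_cast (n+1).factorial_pos
    have hp := poch_pos ha n
    unfold cc at *
    rw [poch_succ, Nat.factorial_succ]
    push_cast
    rw [div_le_one (by positivity)] at *
    calc poch a n * (a + n) ≤ n.factorial * (a + n) := by nlinarith
    _ ≤ (n+1) * n.factorial := by nlinarith

lemma cc_succ (n : ℕ) : cc a (n+1) * (n+1) = cc a n * (a + n) := by
  have h2 : ((n+1).factorial : ℝ) = (n+1) * n.factorial := by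
    rw [Nat.factorial_succ]; push_cast; ring
  have h1 : (0:ℝ) < n.factorial := by exact_mod_cast n.factorial_pos
  unfold cc
  rw [poch_succ, h2]
  field_simp

include ha ha1 in
lemma summable_cc_pow {t : ℝ} (ht : |t| < 1) : Summable (fun n => cc a n * t ^ n) := by
  apply Summable.of_norm
  apply Summable.of_nonneg_of_le (fun n => norm_nonneg _) (fun n => ?_)
    (summable_geometric_of_lt_one (abs_nonneg t) ht)
  rw [norm_mul, norm_pow]
  calc ‖cc a n‖ * ‖t‖ ^ n ≤ 1 * |t| ^ n := by
        apply mul_le_mul_of_nonneg_right _ (by positivity)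
        rw [Real.norm_eq_abs, abs_of_pos (cc_pos ha n)]
        exact cc_le_one ha ha1 n
  _ = |t| ^ n := one_mul _

include ha ha1 in
lemma summable_n_cc_pow {t : ℝ} (ht : |t| < 1) : Summable (fun n => cc a n * ((n:ℝ) * t ^ n)) := by
  apply Summable.of_norm
  apply Summable.of_nonneg_of_le (fun n => norm_nonneg _) (fun n => ?_)
    (summable_pow_mul_geometric_of_norm_lt_one 1 (by rw [Real.norm_eq_abs, abs_abs]; exact ht) : Summable fun n : ℕ => (n:ℝ)^1 * |t| ^ n)
  rw [norm_mul, norm_mul, norm_pow, pow_one]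
  have h1 : ‖cc a n‖ ≤ 1 := by
    rw [Real.norm_eq_abs, abs_of_pos (cc_pos ha n)]; exact cc_le_one ha ha1 n
  have : ‖(n:ℝ)‖ = (n:ℝ) := by simp
  rw [this]
  calc ‖cc a n‖ * ((n:ℝ) * ‖t‖ ^ n) ≤ 1 * ((n:ℝ) * |t| ^ n) := by
        apply mul_le_mul_of_nonneg_right h1 (by positivity)
  _ = (n:ℝ) * |t| ^ n := one_mul _

include ha ha1 in
lemma binomial_tsum {t : ℝ} (ht0 : 0 ≤ t) (ht1 : t < 1) :
    ∑' n, cc a n * t ^ n = (1 - t) ^ (-a) := by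
  set r : ℝ := (1 + t) / 2 with hr
  have hr0 : 0 < r := by rw [hr]; linarith
  have hr1 : r < 1 := by rw [hr]; linarith
  have hrt : t < r := by rw [hr]; linarith
  set s : Set ℝ := Set.Ioo (-r) r with hs
  have hso : IsOpen s := isOpen_Ioo
  have hsc : IsPreconnected s := (convex_Ioo _ _).isPreconnected
  set h : ℝ → ℝ := fun z => ∑' n, cc a n * z ^ n with hh
  set D : ℝ → ℝ := fun z => ∑' n, cc a n * ((n:ℝ) * z ^ (n - 1)) with hD
  have hu : Summable (fun n : ℕ => (n:ℝ) * r ^ (n - 1)) := by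
    rw [← summable_nat_add_iff 1]
    have h1 : Summable (fun n : ℕ => (n:ℝ) * r ^ n) := by
      simpa using summable_pow_mul_geometric_of_norm_lt_one 1
        (by rw [Real.norm_eq_abs, abs_of_pos hr0]; exact hr1) (R := ℝ)
    have h2 : Summable (fun n : ℕ => r ^ n) :=
      summable_geometric_of_lt_one hr0.le hr1
    apply (h1.add h2).congr
    intro n
    simp only [Nat.add_sub_cancel]
    push_cast
    ring
  have hderiv : ∀ y ∈ s, HasDerivAt h (D y) y := by
    intro y hy
    rw [hh, hD]
    exact hasDerivAt_tsum_of_isPreconnected hu hso hsc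
      (fun n z _ => (hasDerivAt_pow n z).const_mul (cc a n))
      (fun n z hz => by
        have hz' : |z| ≤ r := by
          rw [abs_le]; exact ⟨(hz.1).le, hz.2.le⟩
        have hcc : |cc a n| ≤ 1 := by
          rw [abs_of_pos (cc_pos ha n)]; exact cc_le_one ha ha1 n
        rw [Real.norm_eq_abs, abs_mul, abs_mul, abs_pow]
        calc |cc a n| * (|(n:ℝ)| * |z| ^ (n-1))
            ≤ 1 * ((n:ℝ) * r ^ (n-1)) := by
              apply mul_le_mul hcc _ (by positivity) zero_le_one
              exact mul_le_mul (by simp) (pow_le_pow_left₀ (abs_nonneg z) hz' _)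
                (by positivity) (Nat.cast_nonneg n)
          _ = (n:ℝ) * r ^ (n-1) := one_mul _)
      (Set.mem_Ioo.mpr ⟨by linarith, hr0⟩)
      (summable_cc_pow ha ha1 (by rw [abs_zero]; exact zero_lt_one))
      hy
  have hkey : ∀ y ∈ s, (1 - y) * D y = a * h y := by
    intro y hy
    have hy1 : |y| < 1 := by
      rw [abs_lt]; constructor
      · linarith [hy.1]
      · linarith [hy.2]
    have S1 := summable_cc_pow ha ha1 hy1
    have S2 := summable_n_cc_pow ha ha1 hy1
    set E : ℝ := ∑' n, cc a n * ((n:ℝ) * y ^ n) with hE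
    set q : ℕ → ℝ := fun n => cc a n * ((n:ℝ) * y ^ (n - 1)) with hq
    have hshift : HasSum (fun n => q (n+1)) (a * h y + E) := by
      have hsum := (S1.hasSum.mul_left a).add S2.hasSum
      have heq : (fun n : ℕ => q (n+1)) =
          fun n => a * (cc a n * y ^ n) + cc a n * ((n:ℝ) * y ^ n) := by
        funext n
        have hc := cc_succ (a := a) n
        simp only [hq, Nat.add_sub_cancel]
        push_cast
        linear_combination (y ^ n) * hc
      rw [heq]
      exact hsum
    have hqsum : HasSum q (a * h y + E) := by
      have := (hasSum_nat_add_iff (f := q) 1).mp hshift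
      simpa [hq] using this
    have hDval : D y = a * h y + E := hqsum.tsum_eq
    have hyD : y * D y = E := by
      have h1 : y * D y = ∑' n, y * (cc a n * ((n:ℝ) * y ^ (n - 1))) :=
        (tsum_mul_left (a := y) (f := fun n => cc a n * ((n:ℝ) * y ^ (n - 1)))).symm
      rw [h1, hE]
      apply tsum_congr
      intro n
      match n with
      | 0 => norm_num
      | Nat.succ m =>
        simp only [Nat.succ_sub_one]
        rw [pow_succ]
        push_cast
        ring
    rw [sub_mul, one_mul, hyD, hDval]
    ring
  -- the constant function argument
  set g : ℝ → ℝ := fun z => (1 - z) ^ a * h z with hg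
  have hgd : ∀ y ∈ Set.Icc (0:ℝ) t, HasDerivAt g 0 y := by
    intro y hy
    have hys : y ∈ s := Set.mem_Ioo.mpr ⟨by linarith [hy.1], by linarith [hy.2]⟩
    have h1y : (0:ℝ) < 1 - y := by linarith [hy.2]
    have base : HasDerivAt (fun z : ℝ => 1 - z) (-1) y := (hasDerivAt_id y).const_sub 1
    have pow := Real.hasDerivAt_rpow_const (x := 1 - y) (p := a) (Or.inl h1y.ne')
    have hd1 : HasDerivAt (fun z : ℝ => (1 - z) ^ a) (a * (1-y)^(a-1) * (-1)) y :=
      pow.comp y base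
    have hd2 := hderiv y hys
    have hmul := hd1.mul hd2
    have hval : a * (1-y)^(a-1) * (-1) * h y + (1 - y) ^ a * D y = 0 := by
      have e1 : (1-y) ^ a = (1-y) ^ (a-1) * (1-y) := by
        rw [← Real.rpow_add_one h1y.ne' (a-1)]; norm_num
      rw [e1]
      linear_combination ((1-y) ^ (a-1)) * hkey y hys
    rw [hval] at hmul
    exact hmul
  have hcont : ContinuousOn g (Set.Icc 0 t) :=
    fun y hy => ((hgd y hy).continuousAt).continuousWithinAt
  have hconst := constant_of_has_deriv_right_zero hcont
    (fun y hy => ((hgd y (Set.Ico_subset_Icc_self hy)).hasDerivWithinAt)) t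
    (Set.right_mem_Icc.mpr ht0)
  have hh0 : h 0 = 1 := by
    have e : h 0 = ∑' n, cc a n * (0:ℝ) ^ n := rfl
    rw [e, tsum_eq_single 0 (fun n hn => by simp [zero_pow hn])]
    simp [cc_zero]
  have hg0 : g 0 = 1 := by
    have e : g 0 = (1 - 0 : ℝ) ^ a * h 0 := rfl
    rw [e, hh0]
    simp
  rw [hg0] at hconst
  have hfin : (1 - t) ^ a * h t = 1 := hconst
  have hinv : h t = ((1 - t) ^ a)⁻¹ :=
    eq_inv_of_mul_eq_one_right (by linear_combination hfin)
  show h t = (1 - t) ^ (-a)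
  rw [Real.rpow_neg (by linarith : (0:ℝ) ≤ 1 - t)]
  exact hinv

end Binom

lemma beta_eval {x v : ℝ} (hx : 0 < x) (hv : 0 < v) :
    ∫ s in (0:ℝ)..1, s ^ (x-1) * (1-s) ^ (v-1)
      = Real.Gamma x * Real.Gamma v / Real.Gamma (x + v) := by
  have hC := Complex.Gamma_mul_Gamma_eq_betaIntegral
    (s := (x:ℂ)) (t := (v:ℂ)) (by simpa using hx) (by simpa using hv)
  have hbeta : Complex.betaIntegral (x:ℂ) (v:ℂ)
      = ((∫ s in (0:ℝ)..1, s ^ (x-1) * (1-s) ^ (v-1) : ℝ) : ℂ) := by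
    rw [Complex.betaIntegral, ← intervalIntegral.integral_ofReal]
    apply intervalIntegral.integral_congr
    intro s hs
    rw [Set.uIcc_of_le (by norm_num : (0:ℝ) ≤ 1)] at hs
    have hs0 : (0:ℝ) ≤ s := hs.1
    have hs1 : (0:ℝ) ≤ 1 - s := by linarith [hs.2]
    push_cast
    rw [Complex.ofReal_cpow hs0, Complex.ofReal_cpow hs1]
    push_cast
    ring
  rw [hbeta, ← Complex.ofReal_add, Complex.Gamma_ofReal, Complex.Gamma_ofReal,
    Complex.Gamma_ofReal, ← Complex.ofReal_mul, ← Complex.ofReal_mul] at hC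
  have hreal : Real.Gamma x * Real.Gamma v
      = Real.Gamma (x + v) * ∫ s in (0:ℝ)..1, s ^ (x-1) * (1-s) ^ (v-1) := by
    exact_mod_cast hC
  have hpos : 0 < Real.Gamma (x + v) := Real.Gamma_pos_of_pos (by linarith)
  field_simp [hpos.ne'] at hreal ⊢
  linarith [hreal]

lemma tsum_cc_div {a : ℝ} (ha : 0 < a) (ha1 : a < 1) {x : ℝ} (hx : 0 < x) :
    Summable (fun n => cc a n / ((n:ℝ) + x)) ∧
    ∑' n, cc a n / ((n:ℝ) + x)
      = Real.Gamma x * Real.Gamma (1 - a) / Real.Gamma (x + (1 - a)) := by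
  have hv : 0 < 1 - a := by linarith
  set f : ℝ → ℝ := fun s => s ^ (x-1) * (1-s) ^ (-a) with hf
  set J : ℝ := ∫ s in (0:ℝ)..1, s ^ (x-1) * (1-s) ^ ((1-a)-1) with hJ
  have hJval : J = Real.Gamma x * Real.Gamma (1-a) / Real.Gamma (x + (1-a)) :=
    beta_eval hx hv
  have hJpos : 0 < J := by
    rw [hJval]
    have g1 := Real.Gamma_pos_of_pos hx
    have g2 := Real.Gamma_pos_of_pos hv
    have g3 := Real.Gamma_pos_of_pos (show (0:ℝ) < x + (1-a) by linarith)
    positivity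
  have hfeq : ∀ s : ℝ, s ^ (x-1) * (1-s) ^ ((1-a)-1) = f s := by
    intro s; rw [hf]; norm_num
  -- integrability of f on Ioc 0 1
  have hfint : IntegrableOn f (Set.Ioc 0 1) := by
    have hCint := Complex.betaIntegral_convergent
      (u := (x:ℂ)) (v := ((1-a):ℂ)) (by simpa using hx) (by simpa using hv)
    rw [intervalIntegrable_iff_integrableOn_Ioc_of_le (by norm_num : (0:ℝ) ≤ 1)] at hCint
    have hre : IntegrableOn
        (fun s : ℝ => ((s:ℂ) ^ ((x:ℂ)-1) * (1-(s:ℂ)) ^ (((1-a):ℂ)-1)).re)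
        (Set.Ioc 0 1) := hCint.re
    apply IntegrableOn.congr_fun hre ?_ measurableSet_Ioc
    intro s hs
    have hs0 : (0:ℝ) ≤ s := hs.1.le
    have hs1 : (0:ℝ) ≤ 1 - s := by linarith [hs.2]
    have heqc : ((s:ℂ) ^ ((x:ℂ)-1) * (1-(s:ℂ)) ^ (((1-a):ℂ)-1))
        = ((s ^ (x-1) * (1-s) ^ ((1-a)-1) : ℝ) : ℂ) := by
      push_cast
      rw [Complex.ofReal_cpow hs0, Complex.ofReal_cpow hs1]
      push_cast
      ring
    simp only [heqc, Complex.ofReal_re]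
    exact hfeq s
  have hfintO : IntegrableOn f (Set.Ioo 0 1) := hfint.mono_set Set.Ioo_subset_Ioc_self
  -- J as integral over Ioo
  have hJO : J = ∫ s in Set.Ioo (0:ℝ) 1, f s := by
    rw [hJ, intervalIntegral.integral_of_le (by norm_num : (0:ℝ) ≤ 1),
      ← integral_Ioc_eq_integral_Ioo]
    exact setIntegral_congr_fun measurableSet_Ioc (fun s _ => hfeq s)
  -- swap to lintegral
  have hnn : 0 ≤ᵐ[volume.restrict (Set.Ioo (0:ℝ) 1)] f := by
    apply (ae_restrict_iff' measurableSet_Ioo).mpr (ae_of_all _ ?_)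
    intro s hs
    have hs0 : (0:ℝ) ≤ s := hs.1.le
    have hs1 : (0:ℝ) ≤ 1 - s := by linarith [hs.2]
    rw [hf]
    positivity
  have hswap : ENNReal.ofReal J
      = ∫⁻ s in Set.Ioo (0:ℝ) 1, ENNReal.ofReal (f s) := by
    rw [hJO]
    exact ofReal_integral_eq_lintegral_ofReal hfintO hnn
  -- pointwise series expansion
  have hpt : ∀ s ∈ Set.Ioo (0:ℝ) 1, ENNReal.ofReal (f s)
      = ∑' n : ℕ, ENNReal.ofReal (cc a n * s ^ (x - 1 + n)) := by
    intro s hs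
    have hs0 : (0:ℝ) < s := hs.1
    have hs1 : s < 1 := hs.2
    have hterm : ∀ n : ℕ, cc a n * s ^ (x - 1 + n) = s ^ (x-1) * (cc a n * s ^ n) := by
      intro n
      rw [Real.rpow_add hs0, Real.rpow_natCast]
      ring
    have hsum2 : Summable (fun n => cc a n * s ^ (x - 1 + (n:ℝ))) := by
      apply Summable.congr ((summable_cc_pow ha ha1
        (by rw [abs_of_pos hs0]; exact hs1)).mul_left (s ^ (x-1)))
      intro n
      rw [hterm n]
    have hfs : f s = ∑' n, cc a n * s ^ (x - 1 + (n:ℝ)) := by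
      rw [hf]
      simp only []
      rw [← binomial_tsum ha ha1 hs0.le hs1, ← tsum_mul_left]
      exact tsum_congr fun n => (hterm n).symm
    rw [hfs, ENNReal.ofReal_tsum_of_nonneg ?_ hsum2]
    intro n
    have := (cc_pos ha n).le
    have : (0:ℝ) ≤ s ^ (x - 1 + (n:ℝ)) := Real.rpow_nonneg hs0.le _
    positivity
  -- per-term integral
  have hterm_int : ∀ n : ℕ,
      ∫⁻ s in Set.Ioo (0:ℝ) 1, ENNReal.ofReal (cc a n * s ^ (x - 1 + n))
        = ENNReal.ofReal (cc a n / ((n:ℝ) + x)) := by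
    intro n
    have hp : (-1:ℝ) < x - 1 + n := by
      have : (0:ℝ) ≤ n := Nat.cast_nonneg n
      linarith
    have hint : IntegrableOn (fun s : ℝ => cc a n * s ^ (x - 1 + (n:ℝ))) (Set.Ioo 0 1) := by
      have := (intervalIntegral.intervalIntegrable_rpow' hp (a := 0) (b := 1))
      rw [intervalIntegrable_iff_integrableOn_Ioc_of_le (by norm_num : (0:ℝ) ≤ 1)] at this
      exact (this.mono_set Set.Ioo_subset_Ioc_self).const_mul _
    have hnn' : 0 ≤ᵐ[volume.restrict (Set.Ioo (0:ℝ) 1)]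
        (fun s : ℝ => cc a n * s ^ (x - 1 + (n:ℝ))) := by
      apply (ae_restrict_iff' measurableSet_Ioo).mpr (ae_of_all _ ?_)
      intro s hs
      have h1 := (cc_pos ha n).le
      have h2 : (0:ℝ) ≤ s ^ (x - 1 + (n:ℝ)) := Real.rpow_nonneg hs.1.le _
      positivity
    rw [← ofReal_integral_eq_lintegral_ofReal hint hnn']
    congr 1
    rw [integral_const_mul]
    have hval : ∫ s in Set.Ioo (0:ℝ) 1, s ^ (x - 1 + (n:ℝ))
        = 1 / ((n:ℝ) + x) := by
      rw [← integral_Ioc_eq_integral_Ioo,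
        ← intervalIntegral.integral_of_le (by norm_num : (0:ℝ) ≤ 1)]
      rw [integral_rpow (Or.inl hp)]
      have hne : x - 1 + (n:ℝ) + 1 ≠ 0 := by
        have : (0:ℝ) ≤ n := Nat.cast_nonneg n
        intro hcon; nlinarith
      rw [Real.one_rpow, Real.zero_rpow hne]
      rw [show x - 1 + (n:ℝ) + 1 = (n:ℝ) + x by ring]
      norm_num
    rw [hval]
    ring
  -- measurability
  have hmeas : ∀ n : ℕ, AEMeasurable
      (fun s : ℝ => ENNReal.ofReal (cc a n * s ^ (x - 1 + (n:ℝ))))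
      (volume.restrict (Set.Ioo (0:ℝ) 1)) := by
    intro n
    exact (ENNReal.measurable_ofReal.comp
      ((measurable_id'.pow_const _).const_mul _)).aemeasurable
  -- combine
  have hkey : ∑' n : ℕ, ENNReal.ofReal (cc a n / ((n:ℝ) + x)) = ENNReal.ofReal J := by
    rw [hswap, setLIntegral_congr_fun_ae measurableSet_Ioo (ae_of_all _ hpt),
      lintegral_tsum hmeas]
    exact (tsum_congr fun n => (hterm_int n)).symm
  have hgnn : ∀ n : ℕ, 0 ≤ cc a n / ((n:ℝ) + x) := by
    intro n
    have h1 := (cc_pos ha n).le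
    have h2 : (0:ℝ) < (n:ℝ) + x := by positivity
    positivity
  -- summability
  have hsummable : Summable (fun n => cc a n / ((n:ℝ) + x)) := by
    have hcoe : ∀ n : ℕ, ((cc a n / ((n:ℝ) + x)).toNNReal : ℝ≥0∞)
        = ENNReal.ofReal (cc a n / ((n:ℝ) + x)) := fun n => rfl
    have hne : (∑' n : ℕ, ((cc a n / ((n:ℝ) + x)).toNNReal : ℝ≥0∞)) ≠ ⊤ := by
      simp_rw [hcoe, hkey]
      exact ENNReal.ofReal_ne_top
    have h1 := ENNReal.tsum_coe_ne_top_iff_summable.mp hne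
    have h2 : Summable (fun n => ((cc a n / ((n:ℝ) + x)).toNNReal : ℝ)) :=
      NNReal.summable_coe.mpr h1
    apply h2.congr
    intro n
    exact Real.coe_toNNReal _ (hgnn n)
  refine ⟨hsummable, ?_⟩
  have htr := congrArg ENNReal.toReal hkey
  rw [ENNReal.toReal_ofReal hJpos.le,
    ENNReal.tsum_toReal_eq (fun n => ENNReal.ofReal_ne_top)] at htr
  rw [← hJval, ← htr]
  exact tsum_congr fun n => (ENNReal.toReal_ofReal (hgnn n)).symm

theorem sum_np1_3F2 (a b c : ℝ) (ha : 0 < a) (hb : 0 < b) (hc : 0 < c)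
    (hbc : c ≠ b) (ha1 : a < 1) (hab : a - 1 < b) (hac : a - 1 < c) :
    ∑' n : ℕ, ((n : ℝ) + 1) * (poch a n * poch b n * poch c n) /
        (poch (b + 1) n * poch (c + 1) n * poch 1 n) =
      b * c * Real.Gamma (1 - a) / (c - b) *
        ((1 - b) * Real.Gamma b / Real.Gamma (1 - a + b) -
          (1 - c) * Real.Gamma c / Real.Gamma (1 - a + c)) := by
  have hB := tsum_cc_div ha ha1 hb
  have hC := tsum_cc_div ha ha1 hc
  have hcb : c - b ≠ 0 := sub_ne_zero.mpr hbc
  have hterm : ∀ n : ℕ, ((n : ℝ) + 1) * (poch a n * poch b n * poch c n) /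
        (poch (b + 1) n * poch (c + 1) n * poch 1 n)
      = b * c / (c - b) * ((1 - b) * (cc a n / ((n:ℝ) + b))
          - (1 - c) * (cc a n / ((n:ℝ) + c))) := by
    intro n
    have hQ := poch_pos hb n
    have hR := poch_pos hc n
    have hN : (0:ℝ) < n.factorial := by exact_mod_cast n.factorial_pos
    have hbn : (0:ℝ) < b + n := by positivity
    have hcn : (0:ℝ) < c + n := by positivity
    have hnb : (0:ℝ) < (n:ℝ) + b := by positivity
    have hnc : (0:ℝ) < (n:ℝ) + c := by positivity
    rw [poch_shift hb.ne' n, poch_shift hc.ne' n, poch_one]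
    unfold cc
    field_simp
    ring
  rw [tsum_congr hterm, tsum_mul_left,
    Summable.tsum_sub ((hB.1).mul_left (1-b)) ((hC.1).mul_left (1-c)),
    tsum_mul_left, tsum_mul_left, hB.2, hC.2,
    show b + (1 - a) = 1 - a + b by ring, show c + (1 - a) = 1 - a + c by ring]
  ring
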